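/- arXiv:2205.15384 — 6 statements merged into one kernel-verified Lean document; each statement's English description precedes it below -/
import Mathlib

section
/- Let n ≥ 2, let A ∈ SL_n(ℤ) be a hyperbolic matrix, let λ be a real number and α₁, …, α_{n−1} real numbers such that A·(1, α₁, …, α_{n−1})ᵀ = λ·(1, α₁, …, α_{n−1})ᵀ (with A viewed as a real matrix). Then the subfield K = ℚ(α₁, …, α_{n−1}) of ℝ is a totally real number field of degree n over ℚ, and 1, α₁, …, α_{n−1} form a ℚ-basis of K. -/
open Polynomial Matrix IntermediateField

/-- A matrix `A ∈ GL_n(ℤ)` is *hyperbolic* if its characteristic polynomial is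
irreducible over `ℚ` and all of its complex eigenvalues are real. -/
def Matrix.IsHyperbolicGL {n : ℕ} (A : Matrix (Fin n) (Fin n) ℤ) : Prop :=
  Irreducible (A.charpoly.map (Int.castRingHom ℚ)) ∧
  ∀ z : ℂ, (A.charpoly.map (Int.castRingHom ℂ)).IsRoot z → z.im = 0

lemma aux_eval_charpoly {n : ℕ} (M : Matrix (Fin n) (Fin n) ℝ) (r : ℝ) :
    M.charpoly.eval r = (Matrix.scalar (Fin n) r - M).det := by
  rw [Matrix.charpoly, eval_det, Matrix.matPolyEquiv_charmatrix]
  simp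

lemma aux_scalar_mulVec {n : ℕ} (M : Matrix (Fin n) (Fin n) ℝ) (r : ℝ) (v : Fin n → ℝ) :
    (Matrix.scalar (Fin n) r - M).mulVec v = r • v - M.mulVec v := by
  rw [Matrix.sub_mulVec, Matrix.scalar_apply, ← Matrix.smul_one_eq_diagonal,
    Matrix.smul_mulVec, Matrix.one_mulVec]

set_option maxHeartbeats 2000000 in
/-- If `(1, α₁, …, α_{n-1})` is an eigenvector of a hyperbolic matrix
`A ∈ SL_n(ℤ)`, then `K = ℚ(α₁, …, α_{n-1})` is a totally real number field of
degree `n` over `ℚ`, and `1, α₁, …, α_{n-1}` form a `ℚ`-basis of `K`. -/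
theorem statement1 (n : ℕ) (hn : 2 ≤ n) (A : Matrix (Fin n) (Fin n) ℤ)
    (hdet : A.det = 1) (hA : A.IsHyperbolicGL)
    (v : Fin n → ℝ) (hv0 : v ⟨0, by omega⟩ = 1) (lam : ℝ)
    (heig : (A.map (Int.cast : ℤ → ℝ)).mulVec v = lam • v) :
    (∀ σ : Subfield.closure (Set.range v) →+* ℂ, ∀ x, (σ x).im = 0) ∧
    FiniteDimensional ℚ (Subfield.closure (Set.range v)) ∧
    Module.finrank ℚ (Subfield.closure (Set.range v)) = n ∧
    ∃ b : Module.Basis (Fin n) ℚ (Subfield.closure (Set.range v)), ∀ i, (b i : ℝ) = v i := by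
  classical
  set A' : Matrix (Fin n) (Fin n) ℝ := A.map (Int.cast : ℤ → ℝ) with hA'
  set p : Polynomial ℚ := A.charpoly.map (Int.castRingHom ℚ) with hp
  set i0 : Fin n := ⟨0, by omega⟩ with hi0
  have hpmonic : p.Monic := A.charpoly_monic.map _
  have hpdeg : p.natDegree = n := by
    rw [hp, A.charpoly_monic.natDegree_map, A.charpoly_natDegree_eq_dim, Fintype.card_fin]
  have hvne : v ≠ 0 := by
    intro h
    rw [h] at hv0
    simp at hv0
  -- lam is a root of the rational charpoly
  have hevalR : ((A.charpoly.map (Int.castRingHom ℝ))).eval lam = 0 := by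
    have hker : (Matrix.scalar (Fin n) lam - A').mulVec v = 0 := by
      rw [aux_scalar_mulVec, heig, sub_self]
    have hdet0 : (Matrix.scalar (Fin n) lam - A').det = 0 :=
      (Matrix.exists_mulVec_eq_zero_iff).mp ⟨v, hvne, hker⟩
    rw [← Matrix.charpoly_map, aux_eval_charpoly]
    exact hdet0
  have haeval : Polynomial.aeval lam p = 0 := by
    rw [hp, aeval_def, eval₂_eq_eval_map, Polynomial.map_map]
    have : (algebraMap ℚ ℝ).comp (Int.castRingHom ℚ) = Int.castRingHom ℝ :=
      Subsingleton.elim _ _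
    rw [this, hevalR]
  have hint : IsIntegral ℚ lam := ⟨p, hpmonic, haeval⟩
  have hmin : minpoly ℚ lam = p := (minpoly.eq_of_irreducible_of_monic hA.1 haeval hpmonic).symm
  -- The span of the entries of v
  set W : Submodule ℚ ℝ := Submodule.span ℚ (Set.range v) with hW
  have hmemW : ∀ i, v i ∈ W := fun i => Submodule.subset_span (Set.mem_range_self i)
  have hmulvi : ∀ i, lam * v i ∈ W := by
    intro i
    have h1 : lam * v i = A'.mulVec v i := by
      rw [heig, Pi.smul_apply, smul_eq_mul]
    have h2 : A'.mulVec v i = ∑ j, ((A i j : ℚ) : ℝ) * v j := by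
      simp [Matrix.mulVec, dotProduct, hA', Matrix.map_apply]
    rw [h1, h2]
    exact Submodule.sum_mem _ fun j _ => by
      rw [← Rat.smul_def]; exact Submodule.smul_mem _ _ (hmemW j)
  have hmul : ∀ w ∈ W, lam * w ∈ W := by
    intro w hw
    have hmap : Submodule.map (LinearMap.mulLeft ℚ lam) W ≤ W := by
      rw [hW, Submodule.map_span, Submodule.span_le]
      rintro _ ⟨_, ⟨i, rfl⟩, rfl⟩
      exact hmulvi i
    exact hmap ⟨w, hw, rfl⟩
  have hone : (1 : ℝ) ∈ W := hv0 ▸ hmemW i0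
  have hpow : ∀ k : ℕ, lam ^ k ∈ W := by
    intro k
    induction k with
    | zero => simpa using hone
    | succ k ih => rw [pow_succ, mul_comm]; exact hmul _ ih
  have haevalW : ∀ q : ℚ[X], Polynomial.aeval lam q ∈ W := by
    intro q
    rw [Polynomial.aeval_eq_sum_range]
    exact Submodule.sum_mem _ fun k _ => Submodule.smul_mem _ _ (hpow k)
  -- finrank of W is n
  have hWfd : FiniteDimensional ℚ W := FiniteDimensional.span_of_finite ℚ (Set.finite_range v)
  have hle : Module.finrank ℚ W ≤ n := by
    simpa [Set.finrank] using finrank_range_le_card v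
  have hli_pow : LinearIndependent ℚ fun i : Fin n => lam ^ (i : ℕ) := by
    have := linearIndependent_pow (K := ℚ) (S := ℝ) lam
    rwa [hmin, hpdeg] at this
  have hge : n ≤ Module.finrank ℚ W := by
    have hsub : Submodule.span ℚ (Set.range fun i : Fin n => lam ^ (i : ℕ)) ≤ W := by
      rw [Submodule.span_le]
      rintro _ ⟨i, rfl⟩
      exact hpow i
    calc n = Module.finrank ℚ (Submodule.span ℚ (Set.range fun i : Fin n => lam ^ (i : ℕ))) := by
            rw [finrank_span_eq_card hli_pow, Fintype.card_fin]
      _ ≤ Module.finrank ℚ W := Submodule.finrank_mono hsub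
  have hWrank : Module.finrank ℚ W = n := le_antisymm hle hge
  -- The intermediate field E = ℚ(lam)
  set E : IntermediateField ℚ ℝ := ℚ⟮lam⟯ with hE
  have hEfr : Module.finrank ℚ E = n := by
    rw [hE, IntermediateField.adjoin.finrank hint, hmin, hpdeg]
  have hEalg : E.toSubalgebra = Algebra.adjoin ℚ {lam} :=
    IntermediateField.adjoin_simple_toSubalgebra_of_isAlgebraic hint.isAlgebraic
  have hEsubW : Subalgebra.toSubmodule E.toSubalgebra ≤ W := by
    intro x hx
    rw [Subalgebra.mem_toSubmodule, hEalg, Algebra.adjoin_singleton_eq_range_aeval,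
      AlgHom.mem_range] at hx
    obtain ⟨q, rfl⟩ := hx
    exact haevalW q
  have hEW : Subalgebra.toSubmodule E.toSubalgebra = W := by
    apply Submodule.eq_of_le_of_finrank_eq hEsubW
    rw [hWrank]
    rw [← hEfr]
    rfl
  -- K = E.toSubfield
  have hvE : ∀ i, v i ∈ E := by
    intro i
    have hmem : v i ∈ Subalgebra.toSubmodule E.toSubalgebra := by rw [hEW]; exact hmemW i
    exact hmem
  have hKle : Subfield.closure (Set.range v) ≤ E.toSubfield := by
    rw [Subfield.closure_le]
    rintro _ ⟨i, rfl⟩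
    exact hvE i
  have hlamsum : lam = ∑ j, ((A i0 j : ℤ) : ℝ) * v j := by
    have h1 : lam = lam * v i0 := by rw [hv0, mul_one]
    have h2 : lam * v i0 = A'.mulVec v i0 := by
      rw [heig, Pi.smul_apply, smul_eq_mul]
    rw [h1, h2]
    simp [Matrix.mulVec, dotProduct, hA', Matrix.map_apply]
  have hlamK : lam ∈ Subfield.closure (Set.range v) := by
    rw [hlamsum]
    exact Subfield.sum_mem _ fun j _ =>
      mul_mem (intCast_mem _ _) (Subfield.subset_closure ⟨j, rfl⟩)
  have hratK : ∀ q : ℚ, algebraMap ℚ ℝ q ∈ Subfield.closure (Set.range v) := by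
    intro q
    simpa using SubfieldClass.ratCast_mem (Subfield.closure (Set.range v)) q
  set K' : IntermediateField ℚ ℝ :=
    Subfield.toIntermediateField (Subfield.closure (Set.range v)) hratK with hK'
  have hEleK' : E ≤ K' := by
    rw [hE, IntermediateField.adjoin_le_iff]
    rintro x rfl
    exact hlamK
  have hKeq : Subfield.closure (Set.range v) = E.toSubfield := by
    refine le_antisymm hKle ?_
    intro x hx
    exact hEleK' hx
  -- lift v to K
  set K := Subfield.closure (Set.range v) with hK
  set vt : Fin n → K := fun i => ⟨v i, Subfield.subset_closure ⟨i, rfl⟩⟩ with hvt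
  let ι : K →ₐ[ℚ] ℝ := (K.subtype).toRatAlgHom
  have hι : ∀ z : K, ι z = (z : ℝ) := fun z => rfl
  have hliv : LinearIndependent ℚ v := by
    rw [linearIndependent_iff_card_eq_finrank_span, Fintype.card_fin]
    exact hWrank.symm
  have hlivt : LinearIndependent ℚ vt := by
    apply LinearIndependent.of_comp ι.toLinearMap
    exact hliv
  have hspan : ⊤ ≤ Submodule.span ℚ (Set.range vt) := by
    intro x _
    have hxW : (x : ℝ) ∈ W := by
      rw [← hEW]
      have hx2 : (x : ℝ) ∈ E.toSubfield := hKeq ▸ x.2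
      exact hx2
    have hmap : Submodule.map ι.toLinearMap (Submodule.span ℚ (Set.range vt)) = W := by
      rw [Submodule.map_span, hW]
      congr 1
      rw [← Set.range_comp]
      rfl
    rw [← hmap] at hxW
    obtain ⟨y, hy, hxy⟩ := hxW
    have hyx : y = x := Subtype.ext hxy
    rwa [← hyx]
  let b : Module.Basis (Fin n) ℚ K := Module.Basis.mk hlivt hspan
  have hfd : FiniteDimensional ℚ K := Module.Basis.finiteDimensional_of_finite b
  refine ⟨?_, hfd, ?_, ⟨b, fun i => by rw [Module.Basis.mk_apply]⟩⟩
  · -- totally real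
    intro σ x
    set lamK : K := ⟨lam, hlamK⟩ with hlamKdef
    set σa : K →ₐ[ℚ] ℂ := σ.toRatAlgHom with hσa
    have hxE : (x : ℝ) ∈ Algebra.adjoin ℚ ({lam} : Set ℝ) := by
      rw [← hEalg]
      have hx2 : (x : ℝ) ∈ E.toSubfield := hKeq ▸ x.2
      exact hx2
    rw [Algebra.adjoin_singleton_eq_range_aeval, AlgHom.mem_range] at hxE
    obtain ⟨q, hq⟩ := hxE
    have hxq : Polynomial.aeval lamK q = x := by
      apply Subtype.ext
      have h1 : ((Polynomial.aeval lamK q : K) : ℝ) = Polynomial.aeval lam q :=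
        (Polynomial.aeval_algHom_apply ι lamK q).symm
      rw [h1]
      exact hq
    have hσx : σa x = Polynomial.aeval (σa lamK) q := by
      rw [← hxq]
      exact (Polynomial.aeval_algHom_apply σa lamK q).symm
    have hplam : Polynomial.aeval lamK p = 0 := by
      apply Subtype.ext
      have h1 : ((Polynomial.aeval lamK p : K) : ℝ) = Polynomial.aeval lam p :=
        (Polynomial.aeval_algHom_apply ι lamK p).symm
      rw [h1, haeval]
      rfl
    have hroot : Polynomial.aeval (σa lamK) p = 0 := by
      rw [Polynomial.aeval_algHom_apply σa lamK p, hplam, map_zero]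
    have hrootC : (A.charpoly.map (Int.castRingHom ℂ)).IsRoot (σa lamK) := by
      have heq : Polynomial.aeval (σa lamK) p
          = (A.charpoly.map (Int.castRingHom ℂ)).eval (σa lamK) := by
        rw [hp, aeval_def, eval₂_eq_eval_map, Polynomial.map_map]
        have : (algebraMap ℚ ℂ).comp (Int.castRingHom ℚ) = Int.castRingHom ℂ :=
          Subsingleton.elim _ _
        rw [this]
      rw [Polynomial.IsRoot, ← heq, hroot]
    have him : (σa lamK).im = 0 := hA.2 _ hrootC
    have hre : σa lamK = algebraMap ℝ ℂ ((σa lamK).re) := by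
      apply Complex.ext
      · simp
      · simpa using him
    show (σa x).im = 0
    rw [hσx, hre, Polynomial.aeval_algebraMap_apply]
    simp
  · -- finrank
    rw [Module.finrank_eq_card_basis b, Fintype.card_fin]
end

section
/- Let n ≥ 2 and let α₁, …, α_{n−1} be real numbers such that 1, α₁, …, α_{n−1} are linearly independent over ℚ. Let G be an n×n integer matrix with determinant ±1, G ≠ I_n and G ≠ −I_n, and suppose G·(1, α₁, …, α_{n−1})ᵀ = λ·(1, α₁, …, α_{n−1})ᵀ for some real number λ. Then λ is irrational. -/
/-- If `1, α₁, …, α_{n-1}` are linearly independent over `ℚ`, `G` is an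
`n × n` integer matrix with determinant `±1`, `G ≠ ±I_n`, and
`G·(1, α₁, …, α_{n-1})ᵀ = λ·(1, α₁, …, α_{n-1})ᵀ`, then `λ` is irrational. -/
theorem statement3 (n : ℕ) (hn : 2 ≤ n) (v : Fin n → ℝ) (hv0 : v ⟨0, by omega⟩ = 1)
    (hli : LinearIndependent ℚ v)
    (G : Matrix (Fin n) (Fin n) ℤ) (hdet : G.det = 1 ∨ G.det = -1)
    (hG1 : G ≠ 1) (hG2 : G ≠ -1) (lam : ℝ)
    (heig : (G.map (Int.cast : ℤ → ℝ)).mulVec v = lam • v) :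
    Irrational lam := by
  rintro ⟨r, hr⟩
  have key : ∀ i j, (G i j : ℚ) = if j = i then r else 0 := by
    intro i j
    have h1 := congrFun heig i
    simp only [Matrix.mulVec, dotProduct, Matrix.map_apply, Pi.smul_apply,
      smul_eq_mul] at h1
    have hz : ∑ k, ((G i k : ℚ) - (if k = i then r else 0)) • v k = 0 := by
      simp only [sub_smul, Finset.sum_sub_distrib, ite_smul, zero_smul,
        Finset.sum_ite_eq', Finset.mem_univ, if_true, Rat.smul_def]
      push_cast
      rw [h1, ← hr]
      ring
    have := Fintype.linearIndependent_iff.mp hli _ hz j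
    linarith [this]
  set i₀ : Fin n := ⟨0, by omega⟩ with hi₀
  set m : ℤ := G i₀ i₀ with hmdef
  have hmr : (m : ℚ) = r := by simpa using key i₀ i₀
  have hGd : G = Matrix.diagonal fun _ => m := by
    ext i j
    have := key i j
    rw [← hmr] at this
    by_cases h : j = i
    · subst h
      simp only [Matrix.diagonal_apply_eq]
      exact_mod_cast (by simpa using this)
    · simp only [Matrix.diagonal_apply_ne' _ h]
      exact_mod_cast (by simpa [h] using this)
  have hdet2 : G.det = m ^ n := by
    rw [hGd, Matrix.det_diagonal]
    simp
  have hunit : IsUnit m := by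
    have : IsUnit (m ^ n) := by
      rcases hdet with h | h <;> rw [hdet2] at h <;> simp [h]
    exact (isUnit_pow_iff (by omega)).mp this
  rcases Int.isUnit_iff.mp hunit with h | h
  · apply hG1
    rw [hGd, h]
    ext i j
    by_cases hij : i = j <;> simp [Matrix.one_apply, Matrix.diagonal_apply, hij]
  · apply hG2
    rw [hGd, h]
    ext i j
    by_cases hij : i = j <;> simp [Matrix.one_apply, Matrix.diagonal_apply, hij]
end

section
/- Let A ∈ GL₄(ℤ) be a hyperbolic matrix with (necessarily distinct) real eigenvalues and corresponding eigenvectors v₁, v₂, v₃, v₄ ∈ ℝ⁴. Then there is no matrix G ∈ GL₄(ℤ) with G ≠ I₄ and G ≠ −I₄ for which there exist nonzero real numbers μ₁, μ₂, μ₃, μ₄ such that G·v₁ = μ₁·v₁, G·v₂ = μ₂·v₂, G·v₃ = μ₃·v₄ and G·v₄ = μ₄·v₃. -/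
/-- A matrix `A ∈ GL₄(ℤ)` is *hyperbolic* if its characteristic polynomial is
irreducible over `ℚ` and all of its complex eigenvalues are real. -/
def Matrix.IsHyperbolicGL4 (A : Matrix (Fin 4) (Fin 4) ℤ) : Prop :=
  Irreducible (A.charpoly.map (Int.castRingHom ℚ)) ∧
  ∀ z : ℂ, (A.charpoly.map (Int.castRingHom ℂ)).IsRoot z → z.im = 0

open Polynomial Matrix Module

private lemma isRoot_charpoly_of_eig {K : Type*} [Field K] {n : Type*} [Fintype n] [DecidableEq n]
    (M : Matrix n n K) {t : K} {w : n → K} (hw : w ≠ 0) (h : M.mulVec w = t • w) :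
    M.charpoly.IsRoot t := by
  have hdet : (t • (1 : Matrix n n K) - M).det = 0 := by
    rw [← Matrix.exists_mulVec_eq_zero_iff]
    exact ⟨w, hw, by
      rw [Matrix.sub_mulVec, Matrix.smul_mulVec, Matrix.one_mulVec, h, sub_self]⟩
  have hme : M.charpoly.eval t = (t • (1 : Matrix n n K) - M).det := by
    rw [Matrix.charpoly, ← Polynomial.coe_evalRingHom, RingHom.map_det]
    congr 1
    ext i j
    by_cases hij : i = j <;>
      simp [Matrix.charmatrix_apply, Matrix.one_apply, hij, Matrix.diagonal_apply,
        Matrix.smul_apply, Matrix.sub_apply, Matrix.map_apply]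
  rw [Polynomial.IsRoot, hme, hdet]

private lemma trace_eq_sum_of_diag (b : Basis (Fin 4) ℝ (Fin 4 → ℝ))
    (M : Matrix (Fin 4) (Fin 4) ℝ) (d : Fin 4 → ℝ)
    (h : ∀ i, M.mulVec (b i) = d i • b i) : M.trace = ∑ i, d i := by
  have h1 : LinearMap.toMatrix b b (Matrix.toLin' M) = Matrix.diagonal d := by
    ext i j
    rw [LinearMap.toMatrix_apply, Matrix.toLin'_apply, h j, _root_.map_smul]
    simp [Matrix.diagonal_apply, Finsupp.single_apply, Basis.repr_self, eq_comm]
    split_ifs with hij <;> simp [hij]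
  have h2 : M.trace = Matrix.trace (LinearMap.toMatrix' (Matrix.toLin' M)) := by
    rw [LinearMap.toMatrix'_toLin']
  rw [h2, ← LinearMap.toMatrix_eq_toMatrix', ← LinearMap.trace_eq_matrix_trace,
    LinearMap.trace_eq_matrix_trace ℝ b, h1, Matrix.trace_diagonal]

private lemma trace_cast' (M : Matrix (Fin 4) (Fin 4) ℤ) :
    (M.map (Int.cast : ℤ → ℝ)).trace = ((M.trace : ℤ) : ℝ) := by
  simp [Matrix.trace, Matrix.diag, Matrix.map_apply]

/-- For a hyperbolic `A ∈ GL₄(ℤ)` with (necessarily distinct) real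
eigenvalues and eigenvectors `v₁, v₂, v₃, v₄`, there is no `G ∈ GL₄(ℤ)` with
`G ≠ ±I₄` such that `G·v₁ = μ₁v₁`, `G·v₂ = μ₂v₂`, `G·v₃ = μ₃v₄`,
`G·v₄ = μ₄v₃` for nonzero reals `μ₁, μ₂, μ₃, μ₄`. -/
theorem statement6 (A : Matrix (Fin 4) (Fin 4) ℤ) (hdetA : A.det = 1 ∨ A.det = -1)
    (hA : A.IsHyperbolicGL4)
    (lam : Fin 4 → ℝ) (hlam : Function.Injective lam)
    (v : Fin 4 → Fin 4 → ℝ) (hv : ∀ i, v i ≠ 0)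
    (heig : ∀ i, (A.map (Int.cast : ℤ → ℝ)).mulVec (v i) = lam i • v i) :
    ¬ ∃ G : Matrix (Fin 4) (Fin 4) ℤ, (G.det = 1 ∨ G.det = -1) ∧ G ≠ 1 ∧ G ≠ -1 ∧
      ∃ μ₁ μ₂ μ₃ μ₄ : ℝ, μ₁ ≠ 0 ∧ μ₂ ≠ 0 ∧ μ₃ ≠ 0 ∧ μ₄ ≠ 0 ∧
        (G.map (Int.cast : ℤ → ℝ)).mulVec (v 0) = μ₁ • v 0 ∧
        (G.map (Int.cast : ℤ → ℝ)).mulVec (v 1) = μ₂ • v 1 ∧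
        (G.map (Int.cast : ℤ → ℝ)).mulVec (v 2) = μ₃ • v 3 ∧
        (G.map (Int.cast : ℤ → ℝ)).mulVec (v 3) = μ₄ • v 2 := by
  rintro ⟨G, hdetG, -, -, μ₁, μ₂, μ₃, μ₄, h1, h2, h3, h4, e0, e1, e2, e3⟩
  -- the inverse of G over ℤ
  set H : Matrix (Fin 4) (Fin 4) ℤ := G.det • G.adjugate with hHdef
  have hGH : G * H = 1 := by
    rw [hHdef, Matrix.mul_smul, Matrix.mul_adjugate, smul_smul]
    rcases hdetG with h | h <;> rw [h] <;> norm_num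
  have hHG : H * G = 1 := by
    rw [hHdef, Matrix.smul_mul, Matrix.adjugate_mul, smul_smul]
    rcases hdetG with h | h <;> rw [h] <;> norm_num
  -- real versions
  set φ : Matrix (Fin 4) (Fin 4) ℤ →+* Matrix (Fin 4) (Fin 4) ℝ :=
    (Int.castRingHom ℝ).mapMatrix with hφdef
  have hφ : ∀ M : Matrix (Fin 4) (Fin 4) ℤ, φ M = M.map (Int.cast : ℤ → ℝ) := fun M => rfl
  set Aℝ := A.map (Int.cast : ℤ → ℝ) with hAℝ
  set Gℝ := G.map (Int.cast : ℤ → ℝ) with hGℝ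
  set Hℝ := H.map (Int.cast : ℤ → ℝ) with hHℝ
  have hHGℝ : Hℝ * Gℝ = 1 := by
    rw [hHℝ, hGℝ, ← hφ, ← hφ, ← _root_.map_mul, hHG, _root_.map_one]
  -- action of H on eigenvectors
  have key : ∀ (x y : Fin 4 → ℝ) (μ : ℝ), μ ≠ 0 → Gℝ.mulVec x = μ • y →
      Hℝ.mulVec y = μ⁻¹ • x := by
    intro x y μ hμ hx
    have h0 : Hℝ.mulVec (Gℝ.mulVec x) = x := by
      rw [Matrix.mulVec_mulVec, hHGℝ, Matrix.one_mulVec]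
    rw [hx, Matrix.mulVec_smul] at h0
    calc Hℝ.mulVec y = (μ⁻¹ * μ) • Hℝ.mulVec y := by rw [inv_mul_cancel₀ hμ, one_smul]
    _ = μ⁻¹ • x := by rw [mul_smul, h0]
  have hH0 := key _ _ _ h1 e0
  have hH1 := key _ _ _ h2 e1
  have hH3 := key _ _ _ h3 e2
  have hH2 := key _ _ _ h4 e3
  -- the integer matrix C = A - G A H acts diagonally on the eigenbasis
  set B : Matrix (Fin 4) (Fin 4) ℤ := G * A * H with hBdef
  set Bℝ := B.map (Int.cast : ℤ → ℝ) with hBℝ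
  have hBmul : Bℝ = Gℝ * Aℝ * Hℝ := by
    rw [hBℝ, hGℝ, hAℝ, hHℝ, ← hφ, ← hφ, ← hφ, ← hφ, hBdef, _root_.map_mul, _root_.map_mul]
  have hBv : ∀ (x y : Fin 4 → ℝ) (μ lamx : ℝ), μ ≠ 0 →
      Hℝ.mulVec x = μ⁻¹ • y → Aℝ.mulVec y = lamx • y → Gℝ.mulVec y = μ • x →
      Bℝ.mulVec x = lamx • x := by
    intro x y μ lamx hμ hHx hAy hGy
    rw [hBmul, ← Matrix.mulVec_mulVec, hHx, Matrix.mulVec_smul, ← Matrix.mulVec_mulVec,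
      hAy, Matrix.mulVec_smul, hGy, smul_smul, smul_smul]
    congr 1
    field_simp
  have hB0 : Bℝ.mulVec (v 0) = lam 0 • v 0 := hBv _ _ _ _ h1 hH0 (heig 0) e0
  have hB1 : Bℝ.mulVec (v 1) = lam 1 • v 1 := hBv _ _ _ _ h2 hH1 (heig 1) e1
  have hB2 : Bℝ.mulVec (v 2) = lam 3 • v 2 := hBv _ _ _ _ h4 hH2 (heig 3) e3
  have hB3 : Bℝ.mulVec (v 3) = lam 2 • v 3 := hBv _ _ _ _ h3 hH3 (heig 2) e2
  set C : Matrix (Fin 4) (Fin 4) ℤ := A - B with hCdef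
  set Cℝ := C.map (Int.cast : ℤ → ℝ) with hCℝ
  have hCmul : Cℝ = Aℝ - Bℝ := by
    rw [hCℝ, hAℝ, hBℝ, ← hφ, ← hφ, ← hφ, hCdef, _root_.map_sub]
  set c : Fin 4 → ℝ := ![0, 0, lam 2 - lam 3, lam 3 - lam 2] with hcdef
  have hC0 : Cℝ.mulVec (v 0) = c 0 • v 0 := by
    rw [hCmul, Matrix.sub_mulVec, heig 0, hB0, sub_self]; simp [hcdef]
  have hC1 : Cℝ.mulVec (v 1) = c 1 • v 1 := by
    rw [hCmul, Matrix.sub_mulVec, heig 1, hB1, sub_self]; simp [hcdef]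
  have hC2 : Cℝ.mulVec (v 2) = c 2 • v 2 := by
    rw [hCmul, Matrix.sub_mulVec, heig 2, hB2]; simp [hcdef, sub_smul]
  have hC3 : Cℝ.mulVec (v 3) = c 3 • v 3 := by
    rw [hCmul, Matrix.sub_mulVec, heig 3, hB3]; simp [hcdef, sub_smul]
  have hC : ∀ i, Cℝ.mulVec (v i) = c i • v i := by
    intro i
    fin_cases i
    · simpa using hC0
    · simpa using hC1
    · simpa using hC2
    · simpa using hC3
  -- eigenvector basis
  have hli : LinearIndependent ℝ v :=
    Module.End.eigenvectors_linearIndependent' (Matrix.toLin' Aℝ) lam hlam v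
      (fun i => ⟨Module.End.mem_eigenspace_iff.2 (by rw [Matrix.toLin'_apply, heig]), hv i⟩)
  have hcard : Fintype.card (Fin 4) = Module.finrank ℝ (Fin 4 → ℝ) := by simp
  let b : Basis (Fin 4) ℝ (Fin 4 → ℝ) := basisOfLinearIndependentOfCardEqFinrank hli hcard
  have hb : ∀ i, b i = v i := fun i => by
    simp [b, coe_basisOfLinearIndependentOfCardEqFinrank]
  -- the two integer traces
  set t₁ : ℤ := (A * C).trace with ht₁def
  set t₂ : ℤ := (A * (A * C)).trace with ht₂def
  have hAC : ∀ i, ((A * C).map (Int.cast : ℤ → ℝ)).mulVec (v i) = (c i * lam i) • v i := by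
    intro i
    rw [← hφ, _root_.map_mul, hφ, hφ, ← hAℝ, ← hCℝ, ← Matrix.mulVec_mulVec, hC i,
      Matrix.mulVec_smul, heig i, smul_smul]
  have hAAC : ∀ i, ((A * (A * C)).map (Int.cast : ℤ → ℝ)).mulVec (v i)
      = (lam i * (c i * lam i)) • v i := by
    intro i
    rw [← hφ, _root_.map_mul, hφ, hφ, ← hAℝ, ← Matrix.mulVec_mulVec, hAC i,
      Matrix.mulVec_smul, heig i, smul_smul, mul_comm (c i * lam i) (lam i)]
  have ht₁ : (t₁ : ℝ) = (lam 2 - lam 3) ^ 2 := by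
    rw [ht₁def, ← trace_cast',
      trace_eq_sum_of_diag b _ (fun i => c i * lam i) (fun i => by rw [hb]; exact hAC i)]
    rw [Fin.sum_univ_four, hcdef]
    simp
    ring
  have ht₂ : (t₂ : ℝ) = (lam 2 - lam 3) ^ 2 * (lam 2 + lam 3) := by
    rw [ht₂def, ← trace_cast',
      trace_eq_sum_of_diag b _ (fun i => lam i * (c i * lam i)) (fun i => by rw [hb]; exact hAAC i)]
    rw [Fin.sum_univ_four, hcdef]
    simp
    ring
  have hd : lam 2 - lam 3 ≠ 0 := sub_ne_zero.2 (hlam.ne (by decide))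
  have hd2 : (lam 2 - lam 3) ^ 2 ≠ 0 := pow_ne_zero 2 hd
  have ht₁0 : (t₁ : ℚ) ≠ 0 := by
    intro h
    have : t₁ = 0 := by exact_mod_cast h
    rw [this] at ht₁
    exact hd2 (by exact_mod_cast ht₁.symm)
  -- rational numbers s = λ₂+λ₃ and p = λ₂λ₃
  set s : ℚ := t₂ / t₁ with hsdef
  set P : ℚ := (s ^ 2 - t₁) / 4 with hPdef
  have hs : (s : ℝ) = lam 2 + lam 3 := by
    rw [hsdef]
    push_cast
    rw [ht₁, ht₂]
    field_simp
  have hP : (P : ℝ) = lam 2 * lam 3 := by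
    rw [hPdef]
    push_cast
    rw [hs, ht₁]
    ring
  -- λ₂ is a root of a rational quadratic
  set r : ℚ[X] := X ^ 2 - Polynomial.C s * X + Polynomial.C P with hrdef
  have hxr : Polynomial.aeval (lam 2) r = 0 := by
    rw [hrdef]
    simp only [map_add, map_sub, map_pow, _root_.map_mul, aeval_X, aeval_C,
      eq_ratCast (algebraMap ℚ ℝ)]
    rw [hs, hP]
    ring
  -- but its minimal polynomial is the irreducible quartic charpoly
  set q : ℚ[X] := A.charpoly.map (Int.castRingHom ℚ) with hqdef
  have hq_monic : q.Monic := (A.charpoly_monic).map _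
  have hxq : Polynomial.aeval (lam 2) q = 0 := by
    rw [hqdef, aeval_def, ← Polynomial.eval_map, Polynomial.map_map,
      show (algebraMap ℚ ℝ).comp (Int.castRingHom ℚ) = Int.castRingHom ℝ from
        Subsingleton.elim _ _,
      show A.charpoly.map (Int.castRingHom ℝ) = Aℝ.charpoly by
        rw [← Matrix.charpoly_map]; rfl]
    exact isRoot_charpoly_of_eig Aℝ (hv 2) (heig 2)
  have hmin : minpoly ℚ (lam 2) = q :=
    (minpoly.eq_of_irreducible_of_monic hA.1 hxq hq_monic).symm
  have hq4 : q.natDegree = 4 := by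
    rw [hqdef, (A.charpoly_monic).natDegree_map, Matrix.charpoly_natDegree_eq_dim,
      Fintype.card_fin]
  have hr2 : r.natDegree ≤ 2 := by
    rw [hrdef]
    compute_degree
  have hr0 : r ≠ 0 := by
    intro h
    have hco : r.coeff 2 = 1 := by
      rw [hrdef]
      simp [coeff_X_pow, Polynomial.coeff_C]
    rw [h] at hco
    simp at hco
  have hle : (minpoly ℚ (lam 2)).natDegree ≤ r.natDegree :=
    Polynomial.natDegree_le_of_dvd (minpoly.dvd ℚ _ hxr) hr0
  rw [hmin, hq4] at hle
  omega
end

section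
/- Let G be a 4×4 integer matrix with determinant ±1, let v₁, v₂, v₃, v₄ be a basis of ℝ⁴, and let μ₁, μ₂, μ₃, μ₄ be nonzero real numbers such that G·v₁ = μ₃·v₃, G·v₂ = μ₄·v₄, G·v₃ = μ₁·v₁ and G·v₄ = μ₂·v₂. Suppose μ₁μ₃ > 0 and μ₂μ₄ > 0, and suppose 1 is a (real) eigenvalue of G. Then μ₁μ₃ = 1 and μ₂μ₄ = 1. -/
/-- If `G` is an integer matrix with determinant `±1` and, with respect to a
basis `v₁, v₂, v₃, v₄` of `ℝ⁴`, `G·v₁ = μ₃v₃`, `G·v₂ = μ₄v₄`, `G·v₃ = μ₁v₁`,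
`G·v₄ = μ₂v₂` with `μ₁μ₃ > 0`, `μ₂μ₄ > 0`, and `1` is an eigenvalue of `G`,
then `μ₁μ₃ = μ₂μ₄ = 1`. -/
theorem statement7 (G : Matrix (Fin 4) (Fin 4) ℤ) (hdet : G.det = 1 ∨ G.det = -1)
    (B : Module.Basis (Fin 4) ℝ (Fin 4 → ℝ))
    (μ₁ μ₂ μ₃ μ₄ : ℝ) (h1 : μ₁ ≠ 0) (h2 : μ₂ ≠ 0) (h3 : μ₃ ≠ 0) (h4 : μ₄ ≠ 0)
    (e1 : (G.map (Int.cast : ℤ → ℝ)).mulVec (B 0) = μ₃ • B 2)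
    (e2 : (G.map (Int.cast : ℤ → ℝ)).mulVec (B 1) = μ₄ • B 3)
    (e3 : (G.map (Int.cast : ℤ → ℝ)).mulVec (B 2) = μ₁ • B 0)
    (e4 : (G.map (Int.cast : ℤ → ℝ)).mulVec (B 3) = μ₂ • B 1)
    (hpos13 : 0 < μ₁ * μ₃) (hpos24 : 0 < μ₂ * μ₄)
    (hev : ∃ w : Fin 4 → ℝ, w ≠ 0 ∧ (G.map (Int.cast : ℤ → ℝ)).mulVec w = w) :
    μ₁ * μ₃ = 1 ∧ μ₂ * μ₄ = 1 := by
  set M := G.map (Int.cast : ℤ → ℝ) with hM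
  set f : (Fin 4 → ℝ) →ₗ[ℝ] (Fin 4 → ℝ) := Matrix.toLin' M with hf
  have hfapp : ∀ v, f v = M.mulVec v := fun v => rfl
  -- determinant of M two ways
  have hdetM : M.det = μ₁ * μ₂ * μ₃ * μ₄ := by
    have h1' : M.det = LinearMap.det f := (LinearMap.det_toLin' M).symm
    have h2' : LinearMap.det f = (LinearMap.toMatrix B B f).det :=
      (LinearMap.det_toMatrix B f).symm
    have hA : LinearMap.toMatrix B B f =
        !![0, 0, μ₁, 0; 0, 0, 0, μ₂; μ₃, 0, 0, 0; 0, μ₄, 0, 0] := by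
      ext i j
      fin_cases i <;> fin_cases j <;>
        simp [LinearMap.toMatrix_apply, hfapp, e1, e2, e3, e4, Finsupp.single_apply,
          Matrix.vecHead, Matrix.vecTail]
    rw [h1', h2', hA]
    simp [Matrix.det_succ_row_zero, Fin.sum_univ_succ, Fin.succAbove]
    ring
  have hdetM' : M.det = (G.det : ℝ) := by
    have : M = (Int.castRingHom ℝ).mapMatrix G := rfl
    rw [this, ← RingHom.map_det]
    rfl
  have hprod : μ₁ * μ₃ * (μ₂ * μ₄) = 1 := by
    rcases hdet with h | h
    · rw [h] at hdetM'; push_cast at hdetM'; rw [hdetM'] at hdetM; linarith [hdetM]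
    · exfalso
      rw [h] at hdetM'; push_cast at hdetM'; rw [hdetM'] at hdetM
      nlinarith [mul_pos hpos13 hpos24]
  -- eigenvector analysis
  obtain ⟨w, hw0, hw⟩ := hev
  set c : Fin 4 → ℝ := fun i => B.repr w i with hc
  have hwsum : w = c 0 • B 0 + c 1 • B 1 + c 2 • B 2 + c 3 • B 3 := by
    have := B.sum_repr w
    rw [Fin.sum_univ_four] at this
    exact this.symm
  have hfw : M.mulVec w = (c 2 * μ₁) • B 0 + (c 3 * μ₂) • B 1 +
      (c 0 * μ₃) • B 2 + (c 1 * μ₄) • B 3 := by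
    have e1' : f (B 0) = μ₃ • B 2 := by rw [hfapp]; exact e1
    have e2' : f (B 1) = μ₄ • B 3 := by rw [hfapp]; exact e2
    have e3' : f (B 2) = μ₁ • B 0 := by rw [hfapp]; exact e3
    have e4' : f (B 3) = μ₂ • B 1 := by rw [hfapp]; exact e4
    rw [← hfapp]
    conv_lhs => rw [hwsum]
    simp only [map_add, map_smul, e1', e2', e3', e4', smul_smul]
    abel
  rw [hfw, hwsum] at hw
  have key : ∀ j, (B.repr ((c 2 * μ₁) • B 0 + (c 3 * μ₂) • B 1 +
      (c 0 * μ₃) • B 2 + (c 1 * μ₄) • B 3)) j =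
      (B.repr (c 0 • B 0 + c 1 • B 1 + c 2 • B 2 + c 3 • B 3)) j := by
    intro j; rw [hw]
  have r0 := key 0
  have r1 := key 1
  have r2 := key 2
  have r3 := key 3
  simp [Finsupp.single_apply] at r0 r1 r2 r3
  have hcne : ∃ i, c i ≠ 0 := by
    by_contra h
    push_neg at h
    apply hw0
    rw [hwsum, h 0, h 1, h 2, h 3]
    simp
  obtain ⟨i, hi⟩ := hcne
  have main : μ₁ * μ₃ = 1 ∨ μ₂ * μ₄ = 1 := by
    fin_cases i
    · left
      have : c 0 * (μ₁ * μ₃) = c 0 := by rw [← r2] at r0; linarith [r0]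
      have := mul_left_cancel₀ hi (by linarith [this] : c 0 * (μ₁ * μ₃) = c 0 * 1)
      exact this
    · right
      have : c 1 * (μ₂ * μ₄) = c 1 := by rw [← r3] at r1; linarith [r1]
      exact mul_left_cancel₀ hi (by linarith [this] : c 1 * (μ₂ * μ₄) = c 1 * 1)
    · left
      have : c 2 * (μ₁ * μ₃) = c 2 := by rw [← r0] at r2; nlinarith [r2]
      exact mul_left_cancel₀ hi (by linarith [this] : c 2 * (μ₁ * μ₃) = c 2 * 1)
    · right
      have : c 3 * (μ₂ * μ₄) = c 3 := by rw [← r1] at r3; nlinarith [r3]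
      exact mul_left_cancel₀ hi (by linarith [this] : c 3 * (μ₂ * μ₄) = c 3 * 1)
  rcases main with h | h
  · refine ⟨h, ?_⟩
    rw [h, one_mul] at hprod; exact hprod
  · refine ⟨?_, h⟩
    rw [h, mul_one] at hprod; exact hprod
end

section
/- Let G be a 4×4 integer matrix, let v₁, v₂, v₃, v₄ be a basis of ℝ⁴, and let μ₁, μ₂, μ₃, μ₄ be nonzero real numbers such that G·v₁ = μ₃·v₃, G·v₂ = μ₄·v₄, G·v₃ = μ₁·v₁ and G·v₄ = μ₂·v₂. If μ₁μ₃ = 1 and μ₂μ₄ = 1, then the characteristic polynomial of G equals X⁴ − 2X² + 1 = (X² − 1)², and there exists a nonzero integer vector z ∈ ℤ⁴ with G·z = z. -/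
open Polynomial

lemma my_eval_charpoly {n : Type*} [DecidableEq n] [Fintype n] {R : Type*} [CommRing R]
    (M : Matrix n n R) (r : R) :
    M.charpoly.eval r = (Matrix.diagonal (fun _ => r) - M).det := by
  rw [Matrix.charpoly, ← Polynomial.coe_evalRingHom, RingHom.map_det]
  congr 1
  ext i j
  by_cases h : i = j <;>
    simp [h, Matrix.charmatrix_apply_eq, Matrix.charmatrix_apply_ne, Matrix.diagonal]

/-- If `G` is an integer matrix and, with respect to a basis `v₁, v₂, v₃, v₄`
of `ℝ⁴`, `G·v₁ = μ₃v₃`, `G·v₂ = μ₄v₄`, `G·v₃ = μ₁v₁`, `G·v₄ = μ₂v₂` with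
`μ₁μ₃ = μ₂μ₄ = 1`, then the characteristic polynomial of `G` equals
`X⁴ − 2X² + 1` and `G` fixes a nonzero integer vector. -/
theorem statement8 (G : Matrix (Fin 4) (Fin 4) ℤ)
    (B : Module.Basis (Fin 4) ℝ (Fin 4 → ℝ))
    (μ₁ μ₂ μ₃ μ₄ : ℝ) (h1 : μ₁ ≠ 0) (h2 : μ₂ ≠ 0) (h3 : μ₃ ≠ 0) (h4 : μ₄ ≠ 0)
    (e1 : (G.map (Int.cast : ℤ → ℝ)).mulVec (B 0) = μ₃ • B 2)
    (e2 : (G.map (Int.cast : ℤ → ℝ)).mulVec (B 1) = μ₄ • B 3)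
    (e3 : (G.map (Int.cast : ℤ → ℝ)).mulVec (B 2) = μ₁ • B 0)
    (e4 : (G.map (Int.cast : ℤ → ℝ)).mulVec (B 3) = μ₂ • B 1)
    (hm13 : μ₁ * μ₃ = 1) (hm24 : μ₂ * μ₄ = 1) :
    (G.map (Int.cast : ℤ → ℝ)).charpoly = X ^ 4 - 2 * X ^ 2 + 1 ∧
    ∃ z : Fin 4 → ℤ, z ≠ 0 ∧ G.mulVec z = z := by
  set M := G.map (Int.cast : ℤ → ℝ) with hM
  set A : Matrix (Fin 4) (Fin 4) ℝ := !![0,0,μ₁,0; 0,0,0,μ₂; μ₃,0,0,0; 0,μ₄,0,0] with hA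
  have hAM : LinearMap.toMatrix B B (Matrix.toLin' M) = A := by
    ext i j
    rw [LinearMap.toMatrix_apply, Matrix.toLin'_apply]
    fin_cases i <;> fin_cases j <;>
      simp [e1, e2, e3, e4, Module.Basis.repr_self, Finsupp.single_apply, hA,
        Matrix.vecHead, Matrix.vecTail]
  have hcm : A.charmatrix =
      !![(X:ℝ[X]), 0, -C μ₁, 0; 0, X, 0, -C μ₂; -C μ₃, 0, X, 0; 0, -C μ₄, 0, X] := by
    ext i j
    fin_cases i <;> fin_cases j <;>
      simp [Matrix.charmatrix_apply_eq, Matrix.charmatrix_apply_ne, hA,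
        Matrix.vecHead, Matrix.vecTail]
  have c13 : C μ₁ * C μ₃ = 1 := by rw [← C_mul, hm13, C_1]
  have c24 : C μ₂ * C μ₄ = 1 := by rw [← C_mul, hm24, C_1]
  have hchar : M.charpoly = X ^ 4 - 2 * X ^ 2 + 1 := by
    have hMA : M.charpoly = A.charpoly := by
      rw [← hAM, LinearMap.charpoly_toMatrix,
        ← LinearMap.charpoly_toMatrix (Matrix.toLin' M) (Pi.basisFun ℝ (Fin 4)),
        LinearMap.toMatrix_eq_toMatrix', LinearMap.toMatrix'_toLin']
    rw [hMA, Matrix.charpoly, hcm]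
    simp [Matrix.det_succ_row_zero, Fin.sum_univ_succ, Matrix.det_fin_three,
      show Fin.succAbove (2:Fin 4) (2:Fin 3) = 3 from rfl]
    linear_combination (-X^2 + C μ₂ * C μ₄) * c13 + (-X^2 + 1) * c24
  refine ⟨hchar, ?_⟩
  have hcharZ : G.charpoly = X ^ 4 - 2 * X ^ 2 + 1 := by
    apply Polynomial.map_injective (Int.castRingHom ℝ) Int.cast_injective
    have : G.map (⇑(Int.castRingHom ℝ)) = M := rfl
    rw [← Matrix.charpoly_map, this, hchar]
    simp [Polynomial.map_ofNat]
  have hdet : (Matrix.diagonal (fun _ => (1:ℤ)) - G).det = 0 := by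
    rw [← my_eval_charpoly, hcharZ]; simp
  obtain ⟨v, hv, hv2⟩ := (Matrix.exists_mulVec_eq_zero_iff).mpr hdet
  refine ⟨v, hv, ?_⟩
  rw [Matrix.sub_mulVec, sub_eq_zero] at hv2
  simpa [Matrix.mulVec_diagonal] using hv2.symm
end

section
/- The real number √(4 − √2) does not belong to the subfield ℚ(√(4 + √2)) of ℝ; in other words, the subfields ℚ(√(4 + √2)) and ℚ(√(4 − √2)) of ℝ are distinct. -/
noncomputable def s2 : ℝ := Real.sqrt 2
noncomputable def t4 : ℝ := Real.sqrt (4 + Real.sqrt 2)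

lemma hs2 : s2^2 = 2 := Real.sq_sqrt (by norm_num)

lemma s2_nonneg : 0 ≤ s2 := Real.sqrt_nonneg 2

lemma ht2 : t4^2 = 4 + s2 := Real.sq_sqrt (by positivity)

lemma pair (a b : ℚ) (h : (a:ℝ) + b * s2 = 0) : a = 0 ∧ b = 0 := by
  have hb : b = 0 := by
    by_contra hb
    apply irrational_sqrt_two
    refine ⟨-a/b, ?_⟩
    have hb' : (b:ℝ) ≠ 0 := by exact_mod_cast hb
    show ((-a/b : ℚ) : ℝ) = s2
    push_cast
    field_simp
    linarith [h]
  refine ⟨?_, hb⟩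
  rw [hb] at h
  push_cast at h
  have : (a:ℝ) = 0 := by linarith
  exact_mod_cast this

lemma no_sq (q : ℚ) (n : ℕ) (hn : ¬ IsSquare n) (h : (q:ℝ)^2 = n) : False := by
  have hirr : Irrational (Real.sqrt n) := irrational_sqrt_natCast_iff.mpr hn
  apply hirr
  refine ⟨|q|, ?_⟩
  rw [← h, Real.sqrt_sq_eq_abs]
  push_cast
  ring

unseal Nat.sqrt.iter in
lemma not_sq14 : ¬ IsSquare (14:ℕ) := by decide

unseal Nat.sqrt.iter in
lemma not_sq7 : ¬ IsSquare (7:ℕ) := by decide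

lemma no14 (q : ℚ) (h : q^2 = 14) : False :=
  no_sq q 14 not_sq14 (by exact_mod_cast h)

lemma no7 (q : ℚ) (h : q^2 = 7) : False :=
  no_sq q 7 not_sq7 (by exact_mod_cast h)

lemma quad (e f : ℚ) (h1 : e^2 + 2*f^2 = 4) (h2 : 4*(e^2*f^2) = 1) : False :=
  no14 (2*e^2 - 4) (by linear_combination (4*e^2)*h1 - 2*h2)

lemma not_sq_4_add (e f : ℚ) : ((e:ℝ) + f * s2)^2 ≠ 4 + s2 := by
  intro h
  have h0 : ((e^2 + 2*f^2 - 4 : ℚ):ℝ) + ((2*e*f - 1 : ℚ):ℝ) * s2 = 0 := by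
    push_cast
    linear_combination h - (f:ℝ)^2 * hs2
  obtain ⟨h1, h2⟩ := pair _ _ h0
  exact quad e f (by linarith) (by linear_combination (2*e*f+1)*h2)

lemma pair_inv (a b : ℚ) (h : (a:ℝ) + b * s2 ≠ 0) :
    ∃ e f : ℚ, ((a:ℝ) + b * s2)⁻¹ = (e:ℝ) + f * s2 := by
  have hconj : ((a:ℝ) + b * s2) * ((a:ℝ) - b * s2) = (a:ℝ)^2 - 2*b^2 := by
    linear_combination (-(b:ℝ)^2) * hs2
  have hconj0 : (a:ℝ) - b * s2 ≠ 0 := by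
    intro h0
    obtain ⟨h1, h2⟩ := pair a (-b) (by push_cast; linarith [h0])
    have hb : b = 0 := by linarith [h2]
    apply h
    rw [h1, hb]
    push_cast
    ring
  have hw : (a:ℝ)^2 - 2*b^2 ≠ 0 := by
    rw [← hconj]
    exact mul_ne_zero h hconj0
  have hwq : (a^2 - 2*b^2 : ℚ) ≠ 0 := by
    intro h0
    apply hw
    exact_mod_cast h0
  refine ⟨a / (a^2 - 2*b^2), -b / (a^2 - 2*b^2), ?_⟩
  apply inv_eq_of_mul_eq_one_right
  have hwr : ((a^2 - 2*b^2 : ℚ) : ℝ) ≠ 0 := by exact_mod_cast hwq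
  push_cast
  push_cast at hwr
  field_simp
  linear_combination (-(b:ℝ)^2 * ((a:ℝ)^2 - 2*(b:ℝ)^2)⁻¹) * hs2 + mul_inv_cancel₀ hwr

lemma key (x1 x2 y1 y2 : ℚ)
    (h : ((x1:ℝ) + x2 * s2) + ((y1:ℝ) + y2 * s2) * t4 = 0) :
    (x1:ℝ) + x2 * s2 = 0 ∧ (y1:ℝ) + y2 * s2 = 0 := by
  by_cases hy : (y1:ℝ) + y2 * s2 = 0
  · rw [hy, zero_mul, add_zero] at h
    exact ⟨h, hy⟩
  · exfalso
    obtain ⟨e, f, hef⟩ := pair_inv y1 y2 hy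
    have hinv : ((y1:ℝ) + y2 * s2) * ((e:ℝ) + f * s2) = 1 := by
      rw [← hef]
      exact mul_inv_cancel₀ hy
    have ht' : t4 = ((-(x1*e + 2*x2*f) : ℚ):ℝ) + ((-(x1*f + x2*e) : ℚ):ℝ) * s2 := by
      have h1 : ((y1:ℝ) + y2 * s2) * t4 = -((x1:ℝ) + x2 * s2) := by linarith [h]
      have h2 : t4 = (-((x1:ℝ) + x2 * s2)) * ((e:ℝ) + f * s2) := by
        rw [← h1]
        linear_combination (-t4) * hinv
      rw [h2]
      push_cast
      linear_combination (-(x2:ℝ)*f) * hs2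
    apply not_sq_4_add (-(x1*e + 2*x2*f)) (-(x1*f + x2*e))
    rw [← ht']
    exact ht2

set_option maxHeartbeats 1000000 in
lemma inv_aux : ∀ x ∈ {x : ℝ | ∃ a b c d : ℚ, x = (a:ℝ) + b * s2 + c * t4 + d * (s2 * t4)},
    x⁻¹ ∈ {x : ℝ | ∃ a b c d : ℚ, x = (a:ℝ) + b * s2 + c * t4 + d * (s2 * t4)} := by
    rintro x ⟨a, b, c, d, rfl⟩
    rcases eq_or_ne ((a:ℝ) + b * s2 + c * t4 + d * (s2 * t4)) 0 with hx | hx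
    · rw [hx, inv_zero]
      exact ⟨0, 0, 0, 0, by push_cast; ring⟩
    · have e1 : ((a:ℝ) + b * s2 + c * t4 + d * (s2 * t4)) *
          (((a:ℝ) + b * s2) - ((c:ℝ) + d * s2) * t4) =
          ((a^2 + 2*b^2 - 4*c^2 - 8*d^2 - 4*c*d : ℚ):ℝ) +
            ((2*a*b - c^2 - 2*d^2 - 8*c*d : ℚ):ℝ) * s2 := by
        push_cast
        linear_combination (-(((c:ℝ) + d * s2))^2) * ht2 +
          ((b:ℝ)^2 - 2*(c:ℝ)*d - 4*(d:ℝ)^2 - (d:ℝ)^2 * s2) * hs2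
      have hconj : ((a:ℝ) + b * s2) - ((c:ℝ) + d * s2) * t4 ≠ 0 := by
        intro h0
        by_cases hQ : (c:ℝ) + d * s2 = 0
        · obtain ⟨hc, hd⟩ := pair c d hQ
          rw [hQ, zero_mul, sub_zero] at h0
          obtain ⟨ha, hb⟩ := pair a b h0
          apply hx
          rw [ha, hb, hc, hd]
          push_cast
          ring
        · obtain ⟨e, f, hef⟩ := pair_inv c d hQ
          have hinv : ((c:ℝ) + d * s2) * ((e:ℝ) + f * s2) = 1 := by
            rw [← hef]; exact mul_inv_cancel₀ hQ
          have ht' : t4 = ((a*e + 2*b*f : ℚ):ℝ) + ((a*f + b*e : ℚ):ℝ) * s2 := by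
            have h1 : t4 = ((a:ℝ) + b * s2) * ((e:ℝ) + f * s2) := by
              have h2 : ((c:ℝ) + d * s2) * t4 = (a:ℝ) + b * s2 := by
                linarith [h0]
              rw [← h2]
              linear_combination (-t4) * hinv
            rw [h1]
            push_cast
            linear_combination ((b:ℝ)*f) * hs2
          exact not_sq_4_add (a*e + 2*b*f) (a*f + b*e) (by rw [← ht']; exact ht2)
      have hD : ((a^2 + 2*b^2 - 4*c^2 - 8*d^2 - 4*c*d : ℚ):ℝ) +
          ((2*a*b - c^2 - 2*d^2 - 8*c*d : ℚ):ℝ) * s2 ≠ 0 := by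
        rw [← e1]
        exact mul_ne_zero hx hconj
      obtain ⟨e, f, hef⟩ := pair_inv _ _ hD
      have hinv : (((a^2 + 2*b^2 - 4*c^2 - 8*d^2 - 4*c*d : ℚ):ℝ) +
          ((2*a*b - c^2 - 2*d^2 - 8*c*d : ℚ):ℝ) * s2) * ((e:ℝ) + f * s2) = 1 := by
        rw [← hef]; exact mul_inv_cancel₀ hD
      refine ⟨a*e + 2*b*f, a*f + b*e, -(c*e + 2*d*f), -(c*f + d*e), ?_⟩
      have hx_inv : ((a:ℝ) + b * s2 + c * t4 + d * (s2 * t4))⁻¹ =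
          (((a:ℝ) + b * s2) - ((c:ℝ) + d * s2) * t4) * ((e:ℝ) + f * s2) :=
        inv_eq_of_mul_eq_one_right (by rw [← mul_assoc, e1]; exact hinv)
      rw [hx_inv]
      push_cast
      linear_combination ((b:ℝ)*f - (d:ℝ)*f*t4) * hs2

noncomputable def K : Subfield ℝ where
  carrier := {x | ∃ a b c d : ℚ, x = (a:ℝ) + b * s2 + c * t4 + d * (s2 * t4)}
  zero_mem' := ⟨0, 0, 0, 0, by push_cast; ring⟩
  one_mem' := ⟨1, 0, 0, 0, by push_cast; ring⟩
  add_mem' := by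
    rintro x y ⟨a, b, c, d, rfl⟩ ⟨e, f, g, h, rfl⟩
    exact ⟨a + e, b + f, c + g, d + h, by push_cast; ring⟩
  neg_mem' := by
    rintro x ⟨a, b, c, d, rfl⟩
    exact ⟨-a, -b, -c, -d, by push_cast; ring⟩
  mul_mem' := by
    rintro x y ⟨a, b, c, d, rfl⟩ ⟨e, f, g, h, rfl⟩
    refine ⟨a*e + 2*b*f + 4*c*g + 2*c*h + 2*d*g + 8*d*h,
            a*f + b*e + c*g + 4*c*h + 4*d*g + 2*d*h,
            a*g + 2*b*h + c*e + 2*d*f,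
            a*h + b*g + c*f + d*e, ?_⟩
    push_cast
    linear_combination ((c:ℝ)*g + ((c:ℝ)*h + (d:ℝ)*g) * s2 + (d:ℝ)*h * s2^2) * ht2 +
      ((b:ℝ)*f + (c:ℝ)*h + (d:ℝ)*g + 4*(d:ℝ)*h + (d:ℝ)*h * s2 + ((b:ℝ)*h + (d:ℝ)*f) * t4) * hs2
  inv_mem' := inv_aux

lemma t4_mem_K : t4 ∈ K := ⟨0, 0, 1, 0, by push_cast; ring⟩

lemma beta_not_in_K : Real.sqrt (4 - Real.sqrt 2) ∉ K := by
  intro hmem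
  obtain ⟨a, b, c, d, hu⟩ := hmem
  have hle : (0:ℝ) ≤ 4 - Real.sqrt 2 := by
    have h1 := s2_nonneg
    have h2 := hs2
    have h3 := sq_nonneg (s2 - 2)
    show (0:ℝ) ≤ 4 - s2
    nlinarith
  have hu2 : Real.sqrt (4 - Real.sqrt 2) ^ 2 = 4 - s2 := Real.sq_sqrt hle
  have h' : ((a:ℝ) + b * s2 + c * t4 + d * (s2 * t4))^2 = 4 - s2 := by
    rw [← hu]; exact hu2
  have h0 : ((a^2 + 2*b^2 + 4*c^2 + 8*d^2 + 4*c*d - 4 : ℚ):ℝ) +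
      ((2*a*b + c^2 + 2*d^2 + 8*c*d + 1 : ℚ):ℝ) * s2 +
      (((2*(a*c + 2*b*d) : ℚ):ℝ) + ((2*(a*d + b*c) : ℚ):ℝ) * s2) * t4 = 0 := by
    push_cast
    linear_combination h' - ((c:ℝ)^2 + 2*(c:ℝ)*d*s2 + (d:ℝ)^2*s2^2) * ht2 -
      ((b:ℝ)^2 + 2*(c:ℝ)*d + 4*(d:ℝ)^2 + (d:ℝ)^2*s2 + 2*(b:ℝ)*d*t4) * hs2
  obtain ⟨hXr, hYr⟩ := key _ _ _ _ h0
  obtain ⟨hX1, hX2⟩ := pair _ _ hXr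
  obtain ⟨hY1, hY2⟩ := pair _ _ hYr
  have h1 : ((a*c + 2*b*d : ℚ):ℝ) = 0 := by
    have : (a*c + 2*b*d : ℚ) = 0 := by linarith
    exact_mod_cast this
  have h2 : ((a*d + b*c : ℚ):ℝ) = 0 := by
    have : (a*d + b*c : ℚ) = 0 := by linarith
    exact_mod_cast this
  push_cast at h1 h2
  have hprod : ((a:ℝ) + b * s2) * ((c:ℝ) + d * s2) = 0 := by
    linear_combination h1 + s2 * h2 + (b:ℝ)*d * hs2
  rcases mul_eq_zero.mp hprod with hP | hQ
  · obtain ⟨ha, hb⟩ := pair a b hP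
    subst ha hb
    have hcd : 7*(c*d) + 2 = 0 := by linear_combination hX2 - (1/4)*hX1
    have hquartic : (7*c^2 - 8) * (7*c^2 - 1) = 0 := by
      linear_combination (49*c^2/4)*hX1 - (14*c*d + 7*c^2 - 4)*hcd
    rcases mul_eq_zero.mp hquartic with h8 | hone
    · exact no14 (7*c/2) (by linear_combination (7/4)*h8)
    · exact no7 (7*c) (by linear_combination 7*hone)
  · obtain ⟨hc, hd⟩ := pair c d hQ
    subst hc hd
    exact quad a b (by linear_combination hX1) (by linear_combination (2*a*b - 1)*hX2)

/-- `√(4 − √2)` does not lie in the subfield `ℚ(√(4 + √2))` of `ℝ`; in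
particular the subfields `ℚ(√(4 + √2))` and `ℚ(√(4 − √2))` are distinct. -/
theorem statement15 :
    Real.sqrt (4 - Real.sqrt 2) ∉
      Subfield.closure {Real.sqrt (4 + Real.sqrt 2)} ∧
    Subfield.closure {Real.sqrt (4 + Real.sqrt 2)} ≠
      Subfield.closure {Real.sqrt (4 - Real.sqrt 2)} := by
  have h1 : Real.sqrt (4 - Real.sqrt 2) ∉
      Subfield.closure {Real.sqrt (4 + Real.sqrt 2)} := by
    intro hmem
    have hle : Subfield.closure {Real.sqrt (4 + Real.sqrt 2)} ≤ K :=
      Subfield.closure_le.mpr (Set.singleton_subset_iff.mpr t4_mem_K)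
    exact beta_not_in_K (hle hmem)
  refine ⟨h1, fun heq => h1 ?_⟩
  rw [heq]
  exact Subfield.subset_closure rfl
end
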